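/- (Irreducibility of the adjacent-transposition chain on linear extensions.) Let h be a partial order on a finite set V and let l, l' ∈ L[h] be any two linear extensions of h. Then there is a finite sequence l = x_0, x_1, …, x_m = l' such that each x_t ∈ L[h] and each x_{t+1} is obtained from x_t by swapping two adjacent entries of the list x_t. -/

import Mathlib

/-- A (strict) partial order on `V`: an irreflexive transitive binary relation. -/
def IsPartialOrderOn {V : Type*} (r : V → V → Prop) : Prop :=
  (∀ a, ¬ r a a) ∧ (∀ a b c, r a b → r b c → r a c)

/-- `l` is a linear extension of the partial order `r`: it enumerates `V` without
repetition and for `a < b` it is not the case that `l_b ≻ l_a`. -/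
def IsLinext {V : Type*} (r : V → V → Prop) (l : List V) : Prop :=
  l.Nodup ∧ (∀ v : V, v ∈ l) ∧
    ∀ a b : Fin l.length, a < b → ¬ r (l.get b) (l.get a)

/-- `x'` is obtained from `x` by swapping two adjacent entries. -/
def AdjSwap {V : Type*} (x x' : List V) : Prop :=
  ∃ (u v : List V) (a b : V), x = u ++ a :: b :: v ∧ x' = u ++ b :: a :: v

section Aux
variable {V : Type*} {r : V → V → Prop}

def Good (r : V → V → Prop) (l : List V) : Prop :=
  List.Pairwise (fun a b => a ≠ b ∧ ¬ r b a) l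

lemma good_of_linext {l : List V} (h : IsLinext r l) : Good r l := by
  obtain ⟨hn, -, hg⟩ := h
  exact hn.and (List.pairwise_iff_get.mpr fun i j hij => hg i j hij)

lemma linext_of_good {l : List V} (h : Good r l) (hm : ∀ v : V, v ∈ l) : IsLinext r l :=
  ⟨h.imp fun h => h.1, hm, fun a b hab => (List.pairwise_iff_get.mp h a b hab).2⟩

lemma adjswap_perm {x x' : List V} (h : AdjSwap x x') : x.Perm x' := by
  obtain ⟨u, v, a, b, rfl, rfl⟩ := h
  exact List.Perm.append_left u (List.Perm.swap b a v)

def Step (r : V → V → Prop) (x y : List V) : Prop := AdjSwap x y ∧ Good r y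

lemma good_swap {u w : List V} {a b : V} (h : Good r (u ++ a :: b :: w))
    (hba : b ≠ a ∧ ¬ r a b) : Good r (u ++ b :: a :: w) := by
  simp only [Good, List.pairwise_append, List.pairwise_cons, List.mem_cons] at h ⊢
  obtain ⟨h1, ⟨ha, hb, h2⟩, h3⟩ := h
  refine ⟨h1, ⟨?_, ?_, h2⟩, ?_⟩
  · rintro y (rfl | hy)
    · exact hba
    · exact hb y hy
  · rintro y hy; exact ha y (Or.inr hy)
  · intro x hx y hy
    rcases hy with rfl | rfl | hy
    · exact h3 x hx y (Or.inr (Or.inl rfl))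
    · exact h3 x hx y (Or.inl rfl)
    · exact h3 x hx y (Or.inr (Or.inr hy))

open Relation

lemma bubble {v : V} : ∀ (u : List V) (w : List V), Good r (u ++ v :: w) →
    (∀ x ∈ u, x ≠ v ∧ ¬ r x v) →
    ReflTransGen (Step r) (u ++ v :: w) (v :: (u ++ w)) := by
  intro u
  induction u using List.reverseRecOn with
  | nil =>
    intro w _ _
    simpa using (ReflTransGen.refl : ReflTransGen (Step r) (v :: w) (v :: w))
  | append_singleton u₀ a ih =>
    intro w hg hu
    have hgood2 : Good r (u₀ ++ v :: a :: w) := by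
      have := good_swap (u := u₀) (a := a) (b := v) (w := w)
        (by simpa using hg) ⟨(hu a (by simp)).1.symm, (hu a (by simp)).2⟩
      simpa using this
    have step1 : Step r (u₀ ++ [a] ++ v :: w) (u₀ ++ v :: a :: w) :=
      ⟨⟨u₀, w, a, v, by simp, by simp⟩, hgood2⟩
    have step2 := ih (a :: w) hgood2 (fun x hx => hu x (by simp [hx]))
    have : v :: (u₀ ++ a :: w) = v :: ((u₀ ++ [a]) ++ w) := by simp
    exact this ▸ ReflTransGen.head step1 step2

lemma step_cons {v : V} {x y : List V} (h : Step r x y) (hvx : Good r (v :: x)) :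
    Step r (v :: x) (v :: y) ∧ Good r (v :: y) := by
  have hvy : Good r (v :: y) := by
    rw [Good, List.pairwise_cons] at hvx ⊢
    exact ⟨fun z hz => hvx.1 z ((adjswap_perm h.1).mem_iff.mpr hz), h.2⟩
  obtain ⟨⟨u, w, a, b, rfl, rfl⟩, -⟩ := h
  exact ⟨⟨⟨v :: u, w, a, b, rfl, rfl⟩, hvy⟩, hvy⟩

lemma lift_cons {v : V} {x y : List V} (h : ReflTransGen (Step r) x y)
    (hvx : Good r (v :: x)) :
    ReflTransGen (Step r) (v :: x) (v :: y) ∧ Good r (v :: y) := by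
  induction h with
  | refl => exact ⟨ReflTransGen.refl, hvx⟩
  | tail _ hbc ih =>
    obtain ⟨c1, c2⟩ := ih
    obtain ⟨s, g⟩ := step_cons hbc c2
    exact ⟨c1.tail s, g⟩

lemma chain_exists : ∀ (l' l : List V), Good r l → Good r l' → l.Perm l' →
    ReflTransGen (Step r) l l' := by
  intro l'
  induction l' with
  | nil => intro l _ _ hp; rw [List.perm_nil] at hp; subst hp; exact ReflTransGen.refl
  | cons v t' ih =>
    intro l hg hg' hp
    have hv : v ∈ l := hp.mem_iff.mpr (by simp)
    obtain ⟨u, w, rfl⟩ := List.append_of_mem hv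
    have hu : ∀ x ∈ u, x ≠ v ∧ ¬ r x v := by
      intro x hx
      have hnd : (u ++ v :: w).Nodup := hg.imp (fun h => h.1)
      have hxne : x ≠ v := fun heq =>
        (List.disjoint_of_nodup_append hnd) hx (heq ▸ List.mem_cons_self)
      have hxt : x ∈ t' := by
        have hmem : x ∈ v :: t' := hp.mem_iff.mp (by simp [hx])
        rcases List.mem_cons.mp hmem with h | h
        · exact absurd h hxne
        · exact h
      rw [Good, List.pairwise_cons] at hg'
      exact ⟨hxne, (hg'.1 x hxt).2⟩
    have hb := bubble u w hg hu
    have hgv : Good r (v :: (u ++ w)) := by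
      rcases hb.cases_tail with heq | ⟨c, _, hs⟩
      · rw [heq]; exact hg
      · exact hs.2
    have hgt : Good r (u ++ w) := (List.pairwise_cons.mp hgv).2
    have hgt' : Good r t' := (List.pairwise_cons.mp hg').2
    have hp2 : (u ++ w).Perm t' := by
      have h1 : (u ++ v :: w).Perm (v :: (u ++ w)) := List.perm_middle
      exact (h1.symm.trans hp).cons_inv
    have := (lift_cons (ih (u ++ w) hgt hgt' hp2) hgv).1
    exact hb.trans this

lemma to_indexed {x y : List V} (h : ReflTransGen (Step r) x y) (hx : Good r x) :
    ∃ (m : ℕ) (f : ℕ → List V), f 0 = x ∧ f m = y ∧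
      (∀ t ≤ m, Good r (f t) ∧ (f t).Perm x) ∧
      (∀ t < m, AdjSwap (f t) (f (t+1))) := by
  induction h with
  | refl =>
    exact ⟨0, fun _ => x, rfl, rfl, fun t ht => ⟨hx, List.Perm.refl x⟩, fun t ht => absurd ht (by omega)⟩
  | tail _ hbc ih =>
    rename_i b c _
    obtain ⟨m, f, h0, hm, hgood, hsw⟩ := ih
    refine ⟨m + 1, fun t => if t ≤ m then f t else c, by simp [h0], by simp, ?_, ?_⟩
    · intro t ht
      by_cases h : t ≤ m
      · simpa [h] using hgood t h
      · simp only [h, if_false]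
        exact ⟨hbc.2, ((adjswap_perm hbc.1).symm.trans (hm ▸ (hgood m le_rfl).2)).symm.symm⟩
    · intro t ht
      by_cases h : t + 1 ≤ m
      · simpa [h, Nat.le_of_succ_le h] using hsw t (by omega)
      · have ht' : t = m := by omega
        subst ht'
        simpa [h, hm] using hbc.1

end Aux

/- **Statement 12.** Irreducibility of the adjacent-transposition chain on linear
extensions: any two linear extensions of `h` are joined by a finite sequence of linear
extensions of `h` in which consecutive lists differ by an adjacent swap. -/
theorem adjacent_swap_chain_irreducible {V : Type*} [Fintype V]
    (r : V → V → Prop) (hr : IsPartialOrderOn r)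
    (l l' : List V) (hl : IsLinext r l) (hl' : IsLinext r l') :
    ∃ (m : ℕ) (x : ℕ → List V), x 0 = l ∧ x m = l' ∧
      (∀ t ≤ m, IsLinext r (x t)) ∧
      (∀ t < m, AdjSwap (x t) (x (t+1))) := by
  have hg : Good r l := good_of_linext hl
  have hg' : Good r l' := good_of_linext hl'
  have hp : l.Perm l' :=
    (List.perm_ext_iff_of_nodup hl.1 hl'.1).mpr fun a => by
      simp [hl.2.1 a, hl'.2.1 a]
  obtain ⟨m, f, h0, hm, hgood, hsw⟩ := to_indexed (chain_exists l' l hg hg' hp) hg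
  refine ⟨m, f, h0, hm, fun t ht => ?_, hsw⟩
  exact linext_of_good (hgood t ht).1 fun v => (hgood t ht).2.mem_iff.mpr (hl.2.1 v)
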